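/- For n ≥ 1, if A is swallowed by Fin n × C, then A is swallowed by C. -/

import Mathlib

theorem stmt_11 (n : ℕ) (hn : 1 ≤ n) (A C : Type*)
    (f : A ⊕ (Fin n × C) → Fin n × C) (hf : Function.Injective f) :
    ∃ g : A ⊕ C → C, Function.Injective g := by
  cases finite_or_infinite C with
  | inl hC =>
    have hfin : Finite (A ⊕ Fin n × C) := Finite.of_injective f hf
    have hA : Finite A := Finite.sum_left (Fin n × C)
    have hcard : Nat.card (A ⊕ Fin n × C) ≤ Nat.card (Fin n × C) :=
      Nat.card_le_card_of_injective f hf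
    rw [Nat.card_sum] at hcard
    have hA0 : Nat.card A = 0 := by omega
    have hAe : IsEmpty A := by
      rcases Nat.card_eq_zero.mp hA0 with h | h
      · exact h
      · exact absurd hA h.not_finite
    exact ⟨Sum.elim (fun a => hAe.elim a) id, fun x y hxy => by
      cases x with
      | inl a => exact hAe.elim a
      | inr c => cases y with
        | inl a => exact hAe.elim a
        | inr c' => simpa using hxy⟩
  | inr hC =>
    have h1 : Cardinal.mk (Fin n × C) = n * Cardinal.mk C := by
      simp [Cardinal.mk_prod]
    have h2 : (n : Cardinal) * Cardinal.mk C = Cardinal.mk C := by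
      apply Cardinal.mul_eq_right
      · exact Cardinal.infinite_iff.mp hC
      · exact (Cardinal.nat_lt_aleph0 n).le.trans (Cardinal.infinite_iff.mp hC)
      · exact_mod_cast Nat.one_le_iff_ne_zero.mp hn
    have heq : Cardinal.mk (Fin n × C) = Cardinal.mk C := h1.trans h2
    obtain ⟨e⟩ := Cardinal.eq.mp heq
    have hi : Function.Injective (Sum.map (id : A → A) (fun c : C => ((⟨0, hn⟩ : Fin n), c))) := by
      apply Function.Injective.sumMap Function.injective_id
      intro a b hab
      simpa using hab
    exact ⟨e ∘ f ∘ Sum.map id (fun c => ((⟨0, hn⟩ : Fin n), c)),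
      e.injective.comp (hf.comp hi)⟩
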